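/- Let (G_v)_{v∈V} be a family of abelian locally compact groups with given open compact subgroups K_v for v outside a finite set V_∞, and let G be their restricted product. If for each v a continuous character χ_v : G_v → ℂ^× is given with χ_v trivial on K_v for almost all v, then χ(g) = ∏_v χ_v(g_v) is a well-defined continuous character of G, and conversely every continuous character of G arises this way with χ_v unramified for almost all v. -/

import Mathlib

open Filter Topology

lemma aux_c (u : ℂ) (h : ∀ n : ℕ, ‖u ^ n - 1‖ < 1/2) : u = 1 := by
  by_contra hu
  have hne : u - 1 ≠ 0 := sub_ne_zero.mpr hu
  have habs : (0:ℝ) < ‖u - 1‖ := by simpa using (norm_pos_iff.mpr hne)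
  have hre : ∀ n : ℕ, (1:ℝ)/2 < (u ^ n).re := by
    intro n
    have h1 : |((u ^ n) - 1).re| ≤ ‖u ^ n - 1‖ := Complex.abs_re_le_norm _
    have h2 := abs_lt.mp (lt_of_le_of_lt h1 (h n))
    have h3 : ((u ^ n) - 1).re = (u ^ n).re - 1 := by simp
    rw [h3] at h2
    linarith [h2.1]
  obtain ⟨N, hN⟩ := exists_nat_gt ((1/2) / ‖u - 1‖ * 2)
  have hsum : ∑ n ∈ Finset.range N, u ^ n = (u ^ N - 1) / (u - 1) := geom_sum_eq hu N
  have h4 : ‖∑ n ∈ Finset.range N, u ^ n‖ ≤ (1/2) / ‖u - 1‖ := by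
    rw [hsum, norm_div]
    gcongr
    exact le_of_lt (h N)
  have h5 : (N : ℝ)/2 ≤ (∑ n ∈ Finset.range N, u ^ n).re := by
    rw [Complex.re_sum]
    calc (N:ℝ)/2 = ∑ n ∈ Finset.range N, (1:ℝ)/2 := by simp [Finset.sum_const]; ring
    _ ≤ _ := Finset.sum_le_sum fun n _ => le_of_lt (hre n)
  have h6 : (∑ n ∈ Finset.range N, u ^ n).re ≤ ‖∑ n ∈ Finset.range N, u ^ n‖ :=
    Complex.re_le_norm _
  linarith

lemma aux_u (u : ℂˣ) (h : ∀ n : ℕ, ((u:ℂ)) ^ n ∈ Metric.ball (1:ℂ) (1/2)) : u = 1 := by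
  have : (u : ℂ) = 1 := by
    apply aux_c
    intro n
    have := h n
    rwa [Metric.mem_ball, Complex.dist_eq] at this
  exact Units.ext this


/-- The restricted product of a family of groups `G v` with respect to subgroups `K v`:
the subgroup of the direct product consisting of elements whose component lies in `K v`
for almost all `v`. -/
def restrictedProduct {V : Type*} (G : V → Type*) [∀ v, Group (G v)]
    (K : ∀ v, Subgroup (G v)) : Subgroup (∀ v, G v) where
  carrier := {g | ∀ᶠ v in cofinite, g v ∈ K v}
  one_mem' := by
    simp only [Set.mem_setOf_eq]
    exact Eventually.of_forall fun v => (K v).one_mem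
  mul_mem' := by
    intro a b ha hb
    simp only [Set.mem_setOf_eq] at *
    exact (ha.and hb).mono fun v hv => (K v).mul_mem hv.1 hv.2
  inv_mem' := by
    intro a ha
    simp only [Set.mem_setOf_eq] at *
    exact ha.mono fun v hv => (K v).inv_mem hv

/-- Characters of a restricted product of abelian locally compact groups (with open compact
subgroups `K v` outside a finite set `Vinf`, and the restricted product topology, described
by its neighborhood base at `1`):  (a) any family of continuous characters `χ v` of the
`G v`, unramified (trivial on `K v`) for almost all `v`, defines by the product formula
`χ g = ∏ᶠ v, χ v (g v)` a continuous character of the restricted product; (b) conversely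
every continuous character of the restricted product arises this way. -/
theorem stmt_10 {V : Type*} (G : V → Type*) [∀ v, CommGroup (G v)]
    [∀ v, TopologicalSpace (G v)] [∀ v, IsTopologicalGroup (G v)]
    (Vinf : Finset V) (K : ∀ v, Subgroup (G v))
    (hK : ∀ v ∉ Vinf, IsOpen (K v : Set (G v)) ∧ IsCompact (K v : Set (G v)))
    [TopologicalSpace (restrictedProduct G K)] [IsTopologicalGroup (restrictedProduct G K)]
    (hbasis : (𝓝 (1 : restrictedProduct G K)).HasBasis
      (fun N : ∀ v, Set (G v) =>
        (∀ v, N v ∈ 𝓝 (1 : G v)) ∧ ∀ᶠ v in cofinite, N v = (K v : Set (G v)))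
      (fun N => {g : restrictedProduct G K | ∀ v, (g : ∀ v, G v) v ∈ N v})) :
    (∀ χ : ∀ v, G v →* ℂˣ, (∀ v, Continuous (χ v)) →
      (∀ᶠ v in cofinite, ∀ x ∈ K v, χ v x = 1) →
      (Continuous fun g : restrictedProduct G K => ∏ᶠ v, χ v ((g : ∀ v, G v) v)) ∧
        ∀ g h : restrictedProduct G K,
          (∏ᶠ v, χ v (((g * h : restrictedProduct G K) : ∀ v, G v) v)) =
            (∏ᶠ v, χ v ((g : ∀ v, G v) v)) * ∏ᶠ v, χ v ((h : ∀ v, G v) v)) ∧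
    ∀ Χ : restrictedProduct G K →* ℂˣ, Continuous Χ →
      ∃ χ : ∀ v, G v →* ℂˣ, (∀ v, Continuous (χ v)) ∧
        (∀ᶠ v in cofinite, ∀ x ∈ K v, χ v x = 1) ∧
        ∀ g : restrictedProduct G K, Χ g = ∏ᶠ v, χ v ((g : ∀ v, G v) v) := by
  classical
  -- membership lemma
  have hmem : ∀ g : restrictedProduct G K, ∀ᶠ v in cofinite, (g : ∀ v, G v) v ∈ K v :=
    fun g => g.2
  -- evaluation homs are continuous
  set ev : ∀ v, restrictedProduct G K →* G v :=
    fun v => (Pi.evalMonoidHom G v).comp (restrictedProduct G K).subtype with hev_def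
  have hev : ∀ v, Continuous (ev v) := by
    intro v
    apply continuous_of_continuousAt_one
    rw [ContinuousAt, map_one, Filter.tendsto_def]
    intro U hU
    apply hbasis.mem_iff.mpr
    refine ⟨fun w => if h : w = v then h ▸ U else if w ∈ Vinf then Set.univ else (K w : Set (G w)),
      ⟨?_, ?_⟩, ?_⟩
    · intro w
      by_cases h : w = v
      · subst h; simpa using hU
      · simp only [dif_neg h]
        by_cases h2 : w ∈ Vinf
        · simp [h2]
        · simp only [if_neg h2]
          exact ((hK w h2).1).mem_nhds (K w).one_mem
    · apply eventually_cofinite.mpr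
      apply Set.Finite.subset (Set.Finite.union (Set.finite_singleton v) Vinf.finite_toSet)
      intro w hw
      simp only [Set.mem_setOf_eq] at hw
      by_contra hc
      simp only [Set.mem_union, Set.mem_singleton_iff, Finset.mem_coe, not_or] at hc
      exact hw (by simp [dif_neg hc.1, if_neg hc.2])
    · intro g hg
      have := hg v
      exact (by simpa using this : (g : ∀ v, G v) v ∈ U)
  -- inclusion homs
  have hsingle_mem : ∀ v (x : G v), Pi.mulSingle v x ∈ restrictedProduct G K := by
    intro v x
    show ∀ᶠ w in cofinite, Pi.mulSingle v x w ∈ K w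
    filter_upwards [eventually_cofinite_ne v] with w hw
    rw [Pi.mulSingle_eq_of_ne hw]
    exact (K w).one_mem
  set incl : ∀ v, G v →* restrictedProduct G K :=
    fun v => ((MonoidHom.mulSingle G v).codRestrict (restrictedProduct G K)
      (hsingle_mem v)) with hincl_def
  have hincl_coe : ∀ v (x : G v) (w : V),
      ((incl v x : restrictedProduct G K) : ∀ u, G u) w = Pi.mulSingle v x w := fun v x w => rfl
  have hincl_cont : ∀ v, Continuous (incl v) := by
    intro v
    apply continuous_of_continuousAt_one
    rw [ContinuousAt, map_one, hbasis.tendsto_right_iff]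
    rintro N ⟨hN1, -⟩
    filter_upwards [hN1 v] with x hx
    intro w
    rw [hincl_coe]
    by_cases h : w = v
    · subst h; simpa using hx
    · rw [Pi.mulSingle_eq_of_ne h]
      exact mem_of_mem_nhds (hN1 w)
  constructor
  · -- part (a)
    intro χ hcont hunram
    have hfin : ∀ g : restrictedProduct G K,
        (Function.mulSupport fun v => χ v ((g : ∀ v, G v) v)).Finite := by
      intro g
      have : ∀ᶠ v in cofinite, χ v ((g : ∀ v, G v) v) = 1 :=
        (hunram.and (hmem g)).mono fun v hv => hv.1 _ hv.2
      exact eventually_cofinite.mp this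
    have hmul : ∀ g h : restrictedProduct G K,
        (∏ᶠ v, χ v (((g * h : restrictedProduct G K) : ∀ v, G v) v)) =
          (∏ᶠ v, χ v ((g : ∀ v, G v) v)) * ∏ᶠ v, χ v ((h : ∀ v, G v) v) := by
      intro g h
      have heq : (fun v => χ v (((g * h : restrictedProduct G K) : ∀ v, G v) v)) =
          fun v => χ v ((g : ∀ v, G v) v) * χ v ((h : ∀ v, G v) v) := by
        funext v
        rw [← map_mul]
        rfl
      rw [heq, finprod_mul_distrib (hfin g) (hfin h)]
    refine ⟨?_, hmul⟩
    set Χ₀ : restrictedProduct G K →* ℂˣ :=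
      MonoidHom.mk' (fun g => ∏ᶠ v, χ v ((g : ∀ v, G v) v)) hmul with hΧ₀
    have hS := eventually_cofinite.mp hunram
    set T : Finset V := hS.toFinset ∪ Vinf with hT
    set N : ∀ v, Set (G v) := fun v => if v ∈ T then Set.univ else (K v : Set (G v)) with hN
    have hN1 : ∀ v, N v ∈ 𝓝 (1 : G v) := by
      intro v
      by_cases h : v ∈ T
      · simp [hN, h]
      · have hv : v ∉ Vinf := fun hc => h (Finset.mem_union_right _ hc)
        simp only [hN, if_neg h]
        exact ((hK v hv).1).mem_nhds (K v).one_mem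
    have hN2 : ∀ᶠ v in cofinite, N v = (K v : Set (G v)) := by
      apply eventually_cofinite.mpr
      apply Set.Finite.subset T.finite_toSet
      intro v hv
      by_contra hc
      exact hv (by simp [hN, if_neg (by simpa using hc)])
    have hB : {g : restrictedProduct G K | ∀ v, (g : ∀ v, G v) v ∈ N v} ∈ 𝓝 1 :=
      hbasis.mem_of_mem ⟨hN1, hN2⟩
    have hfcont : Continuous (fun g : restrictedProduct G K =>
        ∏ v ∈ T, χ v ((g : ∀ v, G v) v)) := by
      apply continuous_finset_prod
      intro v _
      exact (hcont v).comp (hev v)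
    have heqB : ∀ g ∈ {g : restrictedProduct G K | ∀ v, (g : ∀ v, G v) v ∈ N v},
        Χ₀ g = ∏ v ∈ T, χ v ((g : ∀ v, G v) v) := by
      intro g hg
      apply finprod_eq_prod_of_mulSupport_subset
      intro v hv
      by_contra hvT
      have hvT' : v ∉ T := by simpa using hvT
      have hNv : N v = (K v : Set (G v)) := by simp [hN, if_neg hvT']
      have hgv : (g : ∀ v, G v) v ∈ K v := by
        have := hg v
        rwa [hNv] at this
      have hunv : ∀ x ∈ K v, χ v x = 1 := by
        by_contra hc
        exact hvT (Finset.mem_union_left _ (hS.mem_toFinset.mpr hc))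
      exact hv (hunv _ hgv)
    have hca : ContinuousAt Χ₀ 1 := by
      apply hfcont.continuousAt.congr
      filter_upwards [hB] with g hg
      exact (heqB g hg).symm
    exact continuous_of_continuousAt_one Χ₀ hca
  · -- part (b)
    intro Χ hΧ
    set χ : ∀ v, G v →* ℂˣ := fun v => Χ.comp (incl v) with hχdef
    have hχcont : ∀ v, Continuous (χ v) := fun v => hΧ.comp (hincl_cont v)
    have hUball : (Units.val ⁻¹' Metric.ball (1:ℂ) (1/2)) ∈ 𝓝 (1:ℂˣ) := by
      apply Units.continuous_val.continuousAt.preimage_mem_nhds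
      rw [Units.val_one]
      exact Metric.ball_mem_nhds _ (by norm_num)
    have hpre : Χ ⁻¹' (Units.val ⁻¹' Metric.ball (1:ℂ) (1/2)) ∈ 𝓝 1 :=
      hΧ.continuousAt.preimage_mem_nhds (by rw [map_one]; exact hUball)
    obtain ⟨N, ⟨hN1, hN2⟩, hNsub⟩ := hbasis.mem_iff.mp hpre
    have hkey : ∀ g : restrictedProduct G K,
        (∀ v, ∀ n : ℕ, ((g : ∀ v, G v) v) ^ n ∈ N v) → Χ g = 1 := by
      intro g hg
      apply aux_u
      intro n
      have hpow : (g ^ n : restrictedProduct G K) ∈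
          {g : restrictedProduct G K | ∀ v, (g : ∀ v, G v) v ∈ N v} := by
        intro v
        have : ((g ^ n : restrictedProduct G K) : ∀ v, G v) v = ((g : ∀ v, G v) v) ^ n := by
          rw [SubmonoidClass.coe_pow]
          rfl
        rw [this]
        exact hg v n
      have := hNsub hpow
      rw [Set.mem_preimage, Set.mem_preimage, map_pow] at this
      rwa [Units.val_pow_eq_pow_val] at this
    have hpt : ∀ v, N v = (K v : Set (G v)) → ∀ x ∈ K v, χ v x = 1 := by
      intro v hv x hx
      show Χ (incl v x) = 1
      apply hkey
      intro w n
      rw [hincl_coe]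
      by_cases h : w = v
      · subst h
        rw [Pi.mulSingle_eq_same, hv]
        exact (K w).pow_mem hx n
      · rw [Pi.mulSingle_eq_of_ne h, one_pow]
        exact mem_of_mem_nhds (hN1 w)
    refine ⟨χ, hχcont, hN2.mono hpt, ?_⟩
    intro g
    have hfin2 : {v | ¬((g : ∀ v, G v) v ∈ K v ∧ N v = (K v : Set (G v)))}.Finite :=
      eventually_cofinite.mp ((hmem g).and hN2)
    set T : Finset V := hfin2.toFinset with hT
    have hTc : ∀ v ∉ T, (g : ∀ v, G v) v ∈ K v ∧ N v = (K v : Set (G v)) := by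
      intro v hv
      by_contra hc
      exact hv (hfin2.mem_toFinset.mpr hc)
    set gT : restrictedProduct G K := ∏ v ∈ T, incl v ((g : ∀ v, G v) v) with hgTdef
    have hgT : ∀ w, ((gT : restrictedProduct G K) : ∀ v, G v) w =
        if w ∈ T then (g : ∀ v, G v) w else 1 := by
      intro w
      have hcoe : ((gT : restrictedProduct G K) : ∀ u, G u) w
          = ∏ v ∈ T, Pi.mulSingle v ((g : ∀ v, G v) v) w := by
        rw [hgTdef, SubmonoidClass.coe_finset_prod, Finset.prod_apply]
        rfl
      rw [hcoe]
      by_cases hw : w ∈ T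
      · rw [if_pos hw, Finset.prod_eq_single_of_mem w hw]
        · rw [Pi.mulSingle_eq_same]
        · exact fun b _ hbw => Pi.mulSingle_eq_of_ne (Ne.symm hbw) _
      · rw [if_neg hw]
        exact Finset.prod_eq_one fun b hb => Pi.mulSingle_eq_of_ne (fun h => hw (by rw [h]; exact hb)) _
    have hcomp : ∀ v, ((g * gT⁻¹ : restrictedProduct G K) : ∀ u, G u) v =
        (g : ∀ u, G u) v * (((gT : restrictedProduct G K) : ∀ u, G u) v)⁻¹ := fun v => rfl
    have h1 : Χ (g * gT⁻¹) = 1 := by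
      apply hkey
      intro v n
      rw [hcomp, hgT]
      by_cases hv : v ∈ T
      · rw [if_pos hv, mul_inv_cancel, one_pow]
        exact mem_of_mem_nhds (hN1 v)
      · rw [if_neg hv, inv_one, mul_one, (hTc v hv).2]
        exact (K v).pow_mem (hTc v hv).1 n
    have h2 : Χ gT = ∏ v ∈ T, χ v ((g : ∀ u, G u) v) := by
      rw [hgTdef, map_prod]
      rfl
    have h3 : (∏ᶠ v, χ v ((g : ∀ u, G u) v)) = ∏ v ∈ T, χ v ((g : ∀ u, G u) v) := by
      apply finprod_eq_prod_of_mulSupport_subset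
      intro v hv
      by_contra hvT
      have hvT' : v ∉ T := by simpa using hvT
      exact hv (hpt v (hTc v hvT').2 _ (hTc v hvT').1)
    calc Χ g = Χ ((g * gT⁻¹) * gT) := by rw [inv_mul_cancel_right]
      _ = Χ (g * gT⁻¹) * Χ gT := map_mul _ _ _
      _ = ∏ v ∈ T, χ v ((g : ∀ u, G u) v) := by rw [h1, one_mul, h2]
      _ = _ := h3.symm
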